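/- For 0 < Re(s) < 2 one has ∫₁^∞ dt / (t (t² − 1)^{s/2}) = (1/2) Γ(s/2) Γ(1 − s/2). -/

import Mathlib

open Real MeasureTheory Set

lemma key_pointwise (s : ℂ) {x : ℝ} (hx : x ∈ Ioo (0:ℝ) 1) :
    |(-(1/2) : ℝ) * x ^ (-(1/2) - 1 : ℝ)| •
      (1 / (((x ^ (-(1/2):ℝ) : ℝ) : ℂ) *
        (((x ^ (-(1/2):ℝ) : ℝ)^2 - 1 : ℝ) : ℂ) ^ (s/2)))
    = (1/2 : ℂ) * ((x:ℂ) ^ (s/2 - 1) * (1 - (x:ℂ)) ^ (1 - s/2 - 1)) := by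
  obtain ⟨hx0, hx1⟩ := hx
  have hxne : (x:ℂ) ≠ 0 := Complex.ofReal_ne_zero.2 hx0.ne'
  have h1x : (0:ℝ) < 1 - x := by linarith
  have hsq : (x ^ (-(1/2):ℝ))^2 - 1 = (1-x) * x⁻¹ := by
    rw [← Real.rpow_natCast (x ^ (-(1/2):ℝ)) 2, ← Real.rpow_mul hx0.le]
    norm_num
    rw [Real.rpow_neg_one]
    field_simp
  have habs : |(-(1/2):ℝ) * x ^ (-(1/2) - 1:ℝ)| = (1/2) * x ^ (-(1/2) - 1:ℝ) := by
    rw [abs_mul, abs_neg, abs_of_pos (Real.rpow_pos_of_pos hx0 _)]; norm_num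
  have harg : (x:ℂ).arg ≠ π := by
    rw [Complex.arg_ofReal_of_nonneg hx0.le]; exact Real.pi_ne_zero.symm
  rw [habs, hsq, Complex.real_smul]
  simp only [Complex.ofReal_mul, Complex.ofReal_cpow hx0.le, Complex.ofReal_inv,
    Complex.ofReal_div, Complex.ofReal_one, Complex.ofReal_ofNat, Complex.ofReal_sub]
  rw [show ((1:ℂ)-(x:ℂ)) * (x:ℂ)⁻¹ = ((1-x:ℝ):ℂ) * (((x:ℝ):ℂ))⁻¹ by push_cast; ring]
  rw [show (((x:ℝ):ℂ))⁻¹ = ((x⁻¹:ℝ):ℂ) by push_cast; ring,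
    Complex.mul_cpow_ofReal_nonneg h1x.le (inv_nonneg.2 hx0.le)]
  simp only [Complex.ofReal_inv, Complex.ofReal_sub, Complex.ofReal_one]
  rw [Complex.inv_cpow _ _ harg]
  have hcne : ∀ c : ℂ, (x:ℂ) ^ c ≠ 0 := fun c => by
    simp [Complex.cpow_eq_zero_iff, hxne]
  have h1ne : (1 - (x:ℂ)) ≠ 0 := by
    rw [sub_ne_zero]
    intro h
    exact hx1.ne (by exact_mod_cast h.symm)
  have h1cne : ∀ c : ℂ, (1 - (x:ℂ)) ^ c ≠ 0 := fun c => by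
    simp [Complex.cpow_eq_zero_iff, h1ne]
  rw [show (1 - s/2 - 1 : ℂ) = -(s/2) by ring, Complex.cpow_neg]
  field_simp
  rw [← Complex.cpow_add _ _ hxne,
    show (((-(1/2):ℝ):ℂ) - 1 + s/2) = ((-(1/2):ℝ):ℂ) + (s-2)/2 by push_cast; ring,
    Complex.cpow_add _ _ hxne]
  rw [mul_div_mul_left _ _ (hcne _)]

/-- For `0 < Re(s) < 2`, `∫₁^∞ dt/(t (t² − 1)^{s/2}) = (1/2) Γ(s/2) Γ(1 − s/2)`. -/
theorem integral_beta_type (s : ℂ) (h1 : 0 < s.re) (h2 : s.re < 2) :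
    ∫ t in Ioi (1:ℝ), 1 / ((t:ℂ) * ((t^2 - 1 : ℝ) : ℂ) ^ (s/2))
      = (1/2) * Complex.Gamma (s/2) * Complex.Gamma (1 - s/2) := by
  have hs2 : 0 < (s/2).re := by
    rw [show (2:ℂ) = ((2:ℝ):ℂ) by norm_num, Complex.div_ofReal_re]; linarith
  have hs2' : 0 < (1 - s/2).re := by
    rw [Complex.sub_re, show (2:ℂ) = ((2:ℝ):ℂ) by norm_num, Complex.div_ofReal_re]
    simp only [Complex.one_re]; linarith
  -- reduce RHS to beta integral
  have hbeta : Complex.Gamma (s/2) * Complex.Gamma (1 - s/2)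
      = Complex.betaIntegral (s/2) (1 - s/2) := by
    rw [Complex.Gamma_mul_Gamma_eq_betaIntegral hs2 hs2']
    norm_num [Complex.Gamma_one]
  rw [mul_assoc, hbeta]
  -- change of variables x ↦ x ^ (-1/2) mapping Ioo 0 1 onto Ioi 1
  have himg : (fun x : ℝ => x ^ (-(1/2) : ℝ)) '' Ioo 0 1 = Ioi 1 := by
    ext t
    constructor
    · rintro ⟨x, ⟨hx0, hx1⟩, rfl⟩
      rw [mem_Ioi, Real.one_lt_rpow_iff_of_pos hx0]
      right; constructor <;> linarith
    · intro ht
      rw [mem_Ioi] at ht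
      refine ⟨t ^ (-2 : ℝ), ⟨Real.rpow_pos_of_pos (by linarith) _, ?_⟩, ?_⟩
      · exact Real.rpow_lt_one_of_one_lt_of_neg ht (by norm_num)
      · show (t ^ (-2:ℝ)) ^ (-(1/2):ℝ) = t
        rw [← Real.rpow_mul (by linarith : (0:ℝ) ≤ t)]; norm_num
  have hinj : InjOn (fun x : ℝ => x ^ (-(1/2) : ℝ)) (Ioo 0 1) := by
    intro a ha b hb hab
    have h : ∀ y ∈ Ioo (0:ℝ) 1, (y ^ (-(1/2):ℝ)) ^ (-2:ℝ) = y := by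
      intro y hy
      rw [← Real.rpow_mul hy.1.le]; norm_num
    rw [← h a ha, ← h b hb]
    simp only at hab
    rw [hab]
  have hderiv : ∀ x ∈ Ioo (0:ℝ) 1,
      HasDerivWithinAt (fun x : ℝ => x ^ (-(1/2) : ℝ))
        ((-(1/2)) * x ^ (-(1/2) - 1 : ℝ)) (Ioo 0 1) x := by
    intro x hx
    exact (Real.hasDerivAt_rpow_const (Or.inl hx.1.ne')).hasDerivWithinAt
  rw [← himg,
    integral_image_eq_integral_abs_deriv_smul measurableSet_Ioo hderiv hinj
      (fun t : ℝ => 1 / ((t:ℂ) * ((t^2 - 1 : ℝ) : ℂ) ^ (s/2)))]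
  rw [setIntegral_congr_fun measurableSet_Ioo (fun x hx => key_pointwise s hx)]
  rw [MeasureTheory.integral_const_mul]
  rw [Complex.betaIntegral, intervalIntegral.integral_of_le zero_le_one,
    ← MeasureTheory.integral_Ioc_eq_integral_Ioo]
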